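/- Let (M, Q) be a measurable space with a probability measure Q, let d : M × M → [0,∞] be measurable and symmetric, and define the iterated kernels D_1 := d and D_{n+1}(p,q) := ∫_M D_n(p,r) d(r,q) Q(dr). Assume there exist a measurable set A ⊆ M with Q(A) > 0 and a point p₀ ∈ M such that d(p,q) ≥ d(p,p₀) holds for Q⊗Q-almost every (p,q) ∈ M × A (i.e. almost every pair with q ∈ A), and such that for Q-almost every q ∈ M there exists n ≥ 1 with D_n(p₀,q) > 0. Then for Q⊗Q-almost every (p,q) ∈ M² there exists n ≥ 2 with D_n(p,q) > 0. -/

import Mathlib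

open MeasureTheory
open scoped ENNReal

/-- Auxiliary iterated mark kernels: `DIterAux Q d k = D_{k+1}`, where
`D_{n+1}(p,q) = ∫_M D_n(p,r) d(r,q) Q(dr)`. -/
noncomputable def DIterAux {M : Type*} [MeasurableSpace M] (Q : Measure M)
    (d : M → M → ℝ≥0∞) : ℕ → M → M → ℝ≥0∞
  | 0 => d
  | n + 1 => fun p q => ∫⁻ r, DIterAux Q d n p r * d r q ∂Q

/-- `DN Q d n = D_n` (meaningful for `n ≥ 1`): `D_1 = d`. -/
noncomputable def DN {M : Type*} [MeasurableSpace M] (Q : Measure M)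
    (d : M → M → ℝ≥0∞) (n : ℕ) : M → M → ℝ≥0∞ :=
  DIterAux Q d (n - 1)

section Aux

variable {M : Type*} [MeasurableSpace M] (Q : Measure M) [SFinite Q]
  (d : M → M → ℝ≥0∞)

lemma DIterAux_meas (hmeas : Measurable fun pq : M × M => d pq.1 pq.2) (n : ℕ) :
    Measurable fun pq : M × M => DIterAux Q d n pq.1 pq.2 := by
  induction n with
  | zero => exact hmeas
  | succ n ih =>
    have h1 : Measurable fun x : (M × M) × M => DIterAux Q d n x.1.1 x.2 * d x.2 x.1.2 :=
      (ih.comp (measurable_fst.fst.prodMk measurable_snd)).mul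
        (hmeas.comp (measurable_snd.prodMk measurable_fst.snd))
    exact h1.lintegral_prod_right'

lemma DIterAux_comm (hmeas : Measurable fun pq : M × M => d pq.1 pq.2) (n : ℕ) :
    ∀ p q, ∫⁻ r, d p r * DIterAux Q d n r q ∂Q = DIterAux Q d (n + 1) p q := by
  induction n with
  | zero => intro p q; simp [DIterAux]
  | succ n ih =>
    intro p q
    have hm := DIterAux_meas Q d hmeas n
    have hmRq : ∀ q, Measurable fun r => DIterAux Q d n r q := fun q =>
      hm.comp (measurable_id.prodMk measurable_const)
    have hmLp : ∀ p, Measurable fun s => DIterAux Q d n p s := fun p =>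
      hm.comp (measurable_const.prodMk measurable_id)
    have hdR : ∀ q, Measurable fun r => d r q := fun q =>
      hmeas.comp (measurable_id.prodMk measurable_const)
    have hdL : ∀ p, Measurable fun r => d p r := fun p =>
      hmeas.comp (measurable_const.prodMk measurable_id)
    calc ∫⁻ r, d p r * DIterAux Q d (n + 1) r q ∂Q
        = ∫⁻ r, ∫⁻ s, d p r * (DIterAux Q d n r s * d s q) ∂Q ∂Q := by
          refine lintegral_congr fun r => ?_
          rw [show DIterAux Q d (n + 1) r q = ∫⁻ s, DIterAux Q d n r s * d s q ∂Q from rfl,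
            ← lintegral_const_mul _ (f := fun s => DIterAux Q d n r s * d s q) ((hmLp r).mul (hdR q))]
      _ = ∫⁻ s, ∫⁻ r, d p r * (DIterAux Q d n r s * d s q) ∂Q ∂Q := by
          refine lintegral_lintegral_swap ?_
          exact ((hdL p).comp measurable_fst).mul
            ((hm.mul ((hdR q).comp measurable_snd)).comp
              (measurable_fst.prodMk measurable_snd)) |>.aemeasurable
      _ = ∫⁻ s, (∫⁻ r, d p r * DIterAux Q d n r s ∂Q) * d s q ∂Q := by
          refine lintegral_congr fun s => ?_
          rw [← lintegral_mul_const _ (f := fun r => d p r * DIterAux Q d n r s) ((hdL p).mul (hmRq s))]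
          exact lintegral_congr fun r => by ring
      _ = ∫⁻ s, DIterAux Q d (n + 1) p s * d s q ∂Q := by
          exact lintegral_congr fun s => by rw [ih p s]
      _ = DIterAux Q d (n + 2) p q := rfl

lemma DIterAux_symm (hmeas : Measurable fun pq : M × M => d pq.1 pq.2)
    (hsymm : ∀ p q, d p q = d q p) (n : ℕ) :
    ∀ p q, DIterAux Q d n p q = DIterAux Q d n q p := by
  induction n with
  | zero => exact hsymm
  | succ n ih =>
    intro p q
    rw [show DIterAux Q d (n + 1) q p = ∫⁻ r, DIterAux Q d n q r * d r p ∂Q from rfl,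
      ← DIterAux_comm Q d hmeas n p q]
    exact lintegral_congr fun r => by rw [hsymm p r, ih r q, mul_comm]

lemma DIterAux_chapman (hmeas : Measurable fun pq : M × M => d pq.1 pq.2) (b : ℕ) :
    ∀ (a : ℕ) (p q : M), DIterAux Q d (a + b + 1) p q
      = ∫⁻ r, DIterAux Q d a p r * DIterAux Q d b r q ∂Q := by
  induction b with
  | zero => intro a p q; rfl
  | succ b ih =>
    intro a p q
    have hma := DIterAux_meas Q d hmeas a
    have hmb := DIterAux_meas Q d hmeas b
    have hmLa : ∀ p, Measurable fun s => DIterAux Q d a p s := fun p =>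
      hma.comp (measurable_const.prodMk measurable_id)
    have hdR : ∀ q, Measurable fun r => d r q := fun q =>
      hmeas.comp (measurable_id.prodMk measurable_const)
    calc DIterAux Q d (a + (b + 1) + 1) p q
        = ∫⁻ s, DIterAux Q d (a + b + 1) p s * d s q ∂Q := rfl
      _ = ∫⁻ s, (∫⁻ r, DIterAux Q d a p r * DIterAux Q d b r s ∂Q) * d s q ∂Q := by
          exact lintegral_congr fun s => by rw [ih a p s]
      _ = ∫⁻ s, ∫⁻ r, DIterAux Q d a p r * DIterAux Q d b r s * d s q ∂Q ∂Q := by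
          refine lintegral_congr fun s => ?_
          have h1 : Measurable fun r => DIterAux Q d a p r * DIterAux Q d b r s :=
            (hmLa p).mul (hmb.comp (measurable_id.prodMk measurable_const))
          rw [← lintegral_mul_const _ h1]
      _ = ∫⁻ r, ∫⁻ s, DIterAux Q d a p r * DIterAux Q d b r s * d s q ∂Q ∂Q := by
          refine (lintegral_lintegral_swap ?_).symm
          have hzm : Measurable fun z : M × M =>
              DIterAux Q d a p z.1 * DIterAux Q d b z.1 z.2 * d z.2 q :=
            (((hmLa p).comp measurable_fst).mul hmb).mul ((hdR q).comp measurable_snd)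
          exact hzm.aemeasurable
      _ = ∫⁻ r, DIterAux Q d a p r * DIterAux Q d (b + 1) r q ∂Q := by
          refine lintegral_congr fun r => ?_
          have h2 : Measurable fun s => DIterAux Q d b r s * d s q :=
            (hmb.comp (measurable_const.prodMk measurable_id)).mul (hdR q)
          rw [show DIterAux Q d (b + 1) r q = ∫⁻ s, DIterAux Q d b r s * d s q ∂Q from rfl,
            ← lintegral_const_mul _ h2]
          exact lintegral_congr fun s => by ring

end Aux

/-- Irreducibility under a minorization assumption: if `d(p,q) ≥ d(p,p₀)` for a.e. pair
with `q ∈ A` (where `Q(A) > 0`), and some iterate `D_n(p₀,q)` is positive for a.e. `q`,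
then for a.e. `(p,q)` some iterate `D_n(p,q)` with `n ≥ 2` is positive. -/
theorem irreducibility_from_minorization {M : Type*} [MeasurableSpace M]
    (Q : Measure M) [IsProbabilityMeasure Q]
    (d : M → M → ℝ≥0∞)
    (hmeas : Measurable fun pq : M × M => d pq.1 pq.2)
    (hsymm : ∀ p q, d p q = d q p)
    (A : Set M) (hA : MeasurableSet A) (hApos : 0 < Q A) (p₀ : M)
    (hmin : ∀ᵐ pq ∂(Q.prod Q), pq.2 ∈ A → d pq.1 p₀ ≤ d pq.1 pq.2)
    (hirr : ∀ᵐ q ∂Q, ∃ n : ℕ, 1 ≤ n ∧ 0 < DN Q d n p₀ q) :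
    ∀ᵐ pq ∂(Q.prod Q), ∃ n : ℕ, 2 ≤ n ∧ 0 < DN Q d n pq.1 pq.2 := by
  have hm := DIterAux_meas Q d hmeas
  have hmL : ∀ n p, Measurable fun s => DIterAux Q d n p s := fun n p =>
    (hm n).comp (measurable_const.prodMk measurable_id)
  have hd0 : Measurable fun u => d p₀ u := hmeas.comp (measurable_const.prodMk measurable_id)
  have hsymD := DIterAux_symm Q d hmeas hsymm
  -- reformulate irreducibility
  have hirr' : ∀ᵐ q ∂Q, ∃ k : ℕ, 0 < DIterAux Q d k p₀ q := by
    filter_upwards [hirr] with q hq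
    obtain ⟨n, -, hn⟩ := hq
    exact ⟨n - 1, hn⟩
  -- Step A : ∫ d(p₀,u)² > 0
  have hQne : Q ≠ 0 := fun h => by simp [h] at hApos
  have hI : 0 < ∫⁻ u, d p₀ u * d p₀ u ∂Q := by
    rcases eq_or_ne (∫⁻ u, d p₀ u * d p₀ u ∂Q) 0 with h0 | h0
    · exfalso
      have hz : ∀ᵐ u ∂Q, d p₀ u = 0 := by
        filter_upwards [(lintegral_eq_zero_iff (hd0.mul hd0)).mp h0] with u hu
        exact mul_self_eq_zero.mp hu
      have hzn : ∀ k, ∀ᵐ u ∂Q, DIterAux Q d k p₀ u = 0 := by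
        intro k; induction k with
        | zero => exact hz
        | succ k ih =>
          refine Filter.Eventually.of_forall fun u => ?_
          have hz2 : (fun r => DIterAux Q d k p₀ r * d r u) =ᵐ[Q] 0 := by
            filter_upwards [ih] with r hr; simp [hr]
          rw [show DIterAux Q d (k + 1) p₀ u
              = ∫⁻ r, DIterAux Q d k p₀ r * d r u ∂Q from rfl,
            lintegral_congr_ae hz2]
          simp
      have hbad : ∀ᵐ u ∂Q, False := by
        filter_upwards [ae_all_iff.mpr hzn, hirr'] with u hu hex
        obtain ⟨k, hk⟩ := hex
        exact hk.ne' (hu k)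
      have : (MeasureTheory.ae Q).NeBot := ae_neBot.mpr hQne
      obtain ⟨u, hu⟩ := hbad.exists
      exact hu
    · exact pos_iff_ne_zero.mpr h0
  -- fiberwise versions of the minorization
  have hfib : ∀ᵐ p ∂Q, ∀ᵐ s ∂Q, s ∈ A → d p p₀ ≤ d p s := Measure.ae_ae_of_ae_prod hmin
  have hswap : ∀ᵐ s ∂Q, ∀ᵐ r ∂Q, s ∈ A → d r p₀ ≤ d r s := by
    have h1 : ∀ᵐ pq ∂(Q.prod Q), pq.1 ∈ A → d pq.2 p₀ ≤ d pq.2 pq.1 :=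
      (Measure.measurePreserving_swap (μ := Q) (ν := Q)).quasiMeasurePreserving.ae hmin
    exact Measure.ae_ae_of_ae_prod h1
  -- Step B : pointwise lower bound for D_{k+2}(p, ·)
  have hB1 : ∀ (k : ℕ) (p : M), ∀ᵐ u ∂Q,
      (∫⁻ s in A, DIterAux Q d k p s ∂Q) * d p₀ u ≤ DIterAux Q d (k + 1) p u := by
    intro k p
    filter_upwards [hfib] with u hu
    calc (∫⁻ s in A, DIterAux Q d k p s ∂Q) * d p₀ u
        = ∫⁻ s in A, DIterAux Q d k p s * d p₀ u ∂Q :=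
          (lintegral_mul_const _ (hmL k p)).symm
      _ ≤ ∫⁻ s in A, DIterAux Q d k p s * d s u ∂Q := by
          refine lintegral_mono_ae ?_
          filter_upwards [ae_restrict_of_ae hu, ae_restrict_mem hA] with s hs hsA
          exact mul_le_mul_right (by rw [hsymm p₀ u, hsymm s u]; exact hs hsA) _
      _ ≤ ∫⁻ s, DIterAux Q d k p s * d s u ∂Q := setLIntegral_le_lintegral _ _
      _ = DIterAux Q d (k + 1) p u := rfl
  -- Step C : a.e. p, some set-integral over A is positive
  have hC : ∀ᵐ p ∂Q, ∃ k, 0 < ∫⁻ s in A, DIterAux Q d k p s ∂Q := by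
    have hkA : ∀ᵐ p ∂Q, ∀ k, DIterAux Q d k p p₀ * Q A
        ≤ ∫⁻ s in A, DIterAux Q d k p s ∂Q := by
      filter_upwards [hfib] with p hp
      intro k
      have hae : ∀ᵐ s ∂Q, s ∈ A → DIterAux Q d k p p₀ ≤ DIterAux Q d k p s := by
        cases k with
        | zero => exact hp
        | succ j =>
          filter_upwards [hswap] with s hs hsA
          refine lintegral_mono_ae ?_
          filter_upwards [hs] with r hr
          exact mul_le_mul_right (hr hsA) _
      calc DIterAux Q d k p p₀ * Q A
          = ∫⁻ _ in A, DIterAux Q d k p p₀ ∂Q := (setLIntegral_const _ _).symm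
        _ ≤ ∫⁻ s in A, DIterAux Q d k p s ∂Q := by
            refine lintegral_mono_ae ?_
            filter_upwards [ae_restrict_of_ae hae, ae_restrict_mem hA] with s hs hsA
            exact hs hsA
    filter_upwards [hkA, hirr'] with p hp hex
    obtain ⟨k, hk⟩ := hex
    rw [hsymD k p₀ p] at hk
    exact ⟨k, lt_of_lt_of_le (ENNReal.mul_pos hk.ne' hApos.ne') (hp k)⟩
  -- Step D : conclude on the product
  have h1 : ∀ᵐ pq ∂(Q.prod Q), ∃ k, 0 < ∫⁻ s in A, DIterAux Q d k pq.1 s ∂Q :=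
    Measure.quasiMeasurePreserving_fst.ae hC
  have h2 : ∀ᵐ pq ∂(Q.prod Q), ∃ k, 0 < ∫⁻ s in A, DIterAux Q d k pq.2 s ∂Q :=
    Measure.quasiMeasurePreserving_snd.ae hC
  filter_upwards [h1, h2] with pq hp hq
  obtain ⟨k, hk⟩ := hp
  obtain ⟨m, hm'⟩ := hq
  refine ⟨k + m + 4, by omega, ?_⟩
  have hDN : DN Q d (k + m + 4) pq.1 pq.2 = DIterAux Q d (k + m + 3) pq.1 pq.2 := by
    simp only [DN, show k + m + 4 - 1 = k + m + 3 from by omega]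
  rw [hDN]
  have hcp : DIterAux Q d (k + m + 3) pq.1 pq.2
      = ∫⁻ u, DIterAux Q d (k + 1) pq.1 u * DIterAux Q d (m + 1) u pq.2 ∂Q := by
    have hidx : k + 1 + (m + 1) + 1 = k + m + 3 := by omega
    rw [← hidx]
    exact DIterAux_chapman Q d hmeas (m + 1) (k + 1) pq.1 pq.2
  set a := ∫⁻ s in A, DIterAux Q d k pq.1 s ∂Q with ha
  set b := ∫⁻ s in A, DIterAux Q d m pq.2 s ∂Q with hb
  calc (0 : ℝ≥0∞)
      < a * b * ∫⁻ u, d p₀ u * d p₀ u ∂Q :=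
        ENNReal.mul_pos (ENNReal.mul_pos hk.ne' hm'.ne').ne' hI.ne'
    _ = ∫⁻ u, a * d p₀ u * (b * d p₀ u) ∂Q := by
        rw [← lintegral_const_mul _ (f := fun u => d p₀ u * d p₀ u) (hd0.mul hd0)]
        exact lintegral_congr fun u => by ring
    _ ≤ ∫⁻ u, DIterAux Q d (k + 1) pq.1 u * DIterAux Q d (m + 1) u pq.2 ∂Q := by
        refine lintegral_mono_ae ?_
        filter_upwards [hB1 k pq.1, hB1 m pq.2] with u h1u h2u
        exact mul_le_mul' h1u (by rw [hsymD (m + 1) u pq.2]; exact h2u)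
    _ = DIterAux Q d (k + m + 3) pq.1 pq.2 := hcp.symm
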